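/- There exists a constant C > 0 such that for every integer N ≥ 3 the following holds. Let ξ_j = π(2j−1)/(2(N−1)) for j = 1, …, N−1 and define the Chebyshev mesh of [0,1] by x_0 = 0, x_j = (1 − cos ξ_j)/2 for j = 1, …, N−1, and x_N = 1. For j = 1, …, N set |K_j| = x_j − x_{j−1} and d_{K_j} = sup_{x ∈ [x_{j−1}, x_j]} min(x, 1−x). Then Σ_{j=1}^N d_{K_j} / |K_j| ≤ C N². -/

import Mathlib

open Real

private lemma sin_half_sq (x : ℝ) : Real.sin (x/2)^2 = (1 - Real.cos x)/2 := by
  have h1 : Real.cos (x/2)^2 = 1/2 + Real.cos (2*(x/2))/2 := Real.cos_sq _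
  have h2 : Real.sin (x/2)^2 + Real.cos (x/2)^2 = 1 := Real.sin_sq_add_cos_sq _
  rw [show 2*(x/2) = x by ring] at h1
  linarith

/-- Nodes of the one-dimensional Chebyshev mesh of `[0,1]`:
`x_0 = 0`, `x_j = (1 - cos(π(2j-1)/(2(N-1))))/2` for `1 ≤ j ≤ N-1`, `x_N = 1`. -/
noncomputable def chebNode (N j : ℕ) : ℝ :=
  if j = 0 then 0 else if j = N then 1
  else (1 - Real.cos (Real.pi * (2 * (j : ℝ) - 1) / (2 * ((N : ℝ) - 1)))) / 2

set_option maxHeartbeats 1000000 in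
private lemma cheb_gap (N j : ℕ) (hN : 3 ≤ N) (hj1 : 1 ≤ j) (hj2 : j ≤ N) :
    0 < chebNode N j - chebNode N (j-1) ∧
    min (chebNode N j) (1 - chebNode N (j-1)) ≤ N * (chebNode N j - chebNode N (j-1)) := by
  have hNr : (3:ℝ) ≤ (N:ℝ) := by exact_mod_cast hN
  set Nr : ℝ := (N:ℝ) with hNrdef
  have hNr1 : (2:ℝ) ≤ Nr - 1 := by linarith
  set h : ℝ := π / (2 * (Nr - 1)) with hdef
  have hpi : (0:ℝ) < π := Real.pi_pos
  have hpos : 0 < h := by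
    apply div_pos hpi; linarith
  have hle : h ≤ π / 4 := by
    rw [hdef, div_le_div_iff₀ (by linarith) (by norm_num)]
    nlinarith
  -- value of interior nodes
  have hval : ∀ k : ℕ, 1 ≤ k → k ≤ N - 1 →
      chebNode N k = (1 - Real.cos ((2 * (k:ℝ) - 1) * h)) / 2 := by
    intro k hk1 hk2
    have hk0 : k ≠ 0 := by omega
    have hkN : k ≠ N := by omega
    rw [chebNode, if_neg hk0, if_neg hkN]
    congr 2
    rw [hdef, hNrdef]; ring
  rcases eq_or_lt_of_le hj1 with hj1' | hj1'
  · -- j = 1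
    have hx0 : chebNode N 0 = 0 := by simp [chebNode]
    have hx1 : chebNode N 1 = Real.sin (h/2)^2 := by
      rw [hval 1 le_rfl (by omega), sin_half_sq]
      norm_num
    have hs : 0 < Real.sin (h/2) :=
      Real.sin_pos_of_pos_of_lt_pi (by linarith) (by linarith)
    rw [← hj1', hx0, hx1]
    have hNge : (1:ℝ) ≤ Nr := by linarith
    have hm : min (Real.sin (h/2)^2) (1 - 0) ≤ Real.sin (h/2)^2 := min_le_left _ _
    constructor
    · nlinarith
    · nlinarith [sq_nonneg (Real.sin (h/2))]
  · rcases eq_or_lt_of_le hj2 with hjN | hjN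
    · -- j = N
      have hxN : chebNode N N = 1 := by
        rw [chebNode, if_neg (by omega), if_pos rfl]
      have hcast : ((N - 1 : ℕ) : ℝ) = Nr - 1 := by
        rw [hNrdef]; push_cast [Nat.cast_sub (by omega : 1 ≤ N)]; ring
      have harg : (2 * ((N-1:ℕ):ℝ) - 1) * h = π - h := by
        rw [hcast, hdef]; field_simp
      have hxN1 : chebNode N (N-1) = (1 + Real.cos h) / 2 := by
        rw [hval (N-1) (by omega) (by omega), harg, Real.cos_pi_sub]
        ring
      have hsin : 0 < Real.sin (h/2) :=
        Real.sin_pos_of_pos_of_lt_pi (by linarith) (by linarith)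
      have hcos : (1 - Real.cos h)/2 = Real.sin (h/2)^2 := (sin_half_sq h).symm
      rw [hjN, hxN, hxN1]
      have hNge : (1:ℝ) ≤ Nr := by linarith
      have hmin : min (1:ℝ) (1 - (1 + Real.cos h)/2) ≤ 1 - (1 + Real.cos h)/2 :=
        min_le_right _ _
      constructor
      · nlinarith
      · nlinarith [sq_nonneg (Real.sin (h/2))]
    · -- interior: 2 ≤ j ≤ N-1
      have hj2' : 2 ≤ j := hj1'
      have hjN' : j ≤ N - 1 := by omega
      have hjr : (2:ℝ) ≤ (j:ℝ) := by exact_mod_cast hj2'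
      have hjrN : (j:ℝ) ≤ Nr - 1 := by
        rw [hNrdef]
        have : (j:ℝ) ≤ ((N-1:ℕ):ℝ) := by exact_mod_cast hjN'
        push_cast [Nat.cast_sub (by omega : 1 ≤ N)] at this
        linarith
      set jr : ℝ := (j:ℝ) with hjrdef
      set θ : ℝ := (2*jr - 2) * h with hθdef
      have hxj : chebNode N j = (1 - Real.cos ((2*jr - 1) * h)) / 2 :=
        hval j hj1 hjN'
      have hcastj : ((j - 1 : ℕ) : ℝ) = jr - 1 := by
        rw [hjrdef]; push_cast [Nat.cast_sub (by omega : 1 ≤ j)]; ring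
      have hxj1 : chebNode N (j-1) = (1 - Real.cos ((2*jr - 3) * h)) / 2 := by
        rw [hval (j-1) (by omega) (by omega), hcastj]
        congr 3; ring
      -- gap
      have hgap : chebNode N j - chebNode N (j-1) = Real.sin θ * Real.sin h := by
        rw [hxj, hxj1]
        have hc := Real.cos_sub_cos ((2*jr-3)*h) ((2*jr-1)*h)
        rw [show ((2*jr-3)*h + (2*jr-1)*h)/2 = θ by rw [hθdef]; ring,
            show ((2*jr-3)*h - (2*jr-1)*h)/2 = -h by ring, Real.sin_neg] at hc
        linarith
      have hθ2h : 2*h ≤ θ := by rw [hθdef]; nlinarith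
      have hθpi : θ + 2*h ≤ π := by
        have hπeq : (2*Nr - 2) * h = π := by rw [hdef]; field_simp
        rw [hθdef]; nlinarith
      have hθpos : 0 < θ := by linarith
      have hθltpi : θ < π := by linarith
      have hsθ : 0 < Real.sin θ := Real.sin_pos_of_pos_of_lt_pi hθpos hθltpi
      have hsh : 0 < Real.sin h := Real.sin_pos_of_pos_of_lt_pi hpos (by linarith)
      have hgappos : 0 < chebNode N j - chebNode N (j-1) := by
        rw [hgap]; positivity
      -- N * sin h ≥ 1
      have hjordan : 2/π * h ≤ Real.sin h := Real.mul_le_sin (le_of_lt hpos) (by linarith)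
      have hjeq : 2/π * h = 1/(Nr - 1) := by
        rw [hdef]; field_simp
      have hNsh : 1 ≤ Nr * Real.sin h := by
        have h5 : 1/(Nr-1) ≤ Real.sin h := by linarith [hjordan, hjeq.symm.le.trans hjordan]
        have h6 : 1 ≤ Real.sin h * (Nr - 1) := (div_le_iff₀ (by linarith : (0:ℝ) < Nr-1)).1 h5
        nlinarith
      -- main bound: min ≤ sin θ
      have hmain : min (chebNode N j) (1 - chebNode N (j-1)) ≤ Real.sin θ := by
        rcases le_or_gt θ (π/2) with hcase | hcase
        · -- use left node
          have hb : chebNode N j = Real.sin (((2*jr-1)*h)/2)^2 := by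
            rw [hxj, sin_half_sq]
          have hb2 : ((2*jr-1)*h)/2 ≤ θ := by rw [hθdef]; nlinarith
          have hb0 : 0 ≤ ((2*jr-1)*h)/2 := by nlinarith
          have hmono : Real.sin (((2*jr-1)*h)/2) ≤ Real.sin θ :=
            Real.sin_le_sin_of_le_of_le_pi_div_two (by linarith) hcase hb2
          have hnn : 0 ≤ Real.sin (((2*jr-1)*h)/2) :=
            Real.sin_nonneg_of_nonneg_of_le_pi hb0 (by linarith)
          have hs1 : Real.sin θ ≤ 1 := Real.sin_le_one θ
          calc min (chebNode N j) (1 - chebNode N (j-1)) ≤ chebNode N j := min_le_left _ _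
            _ ≤ Real.sin θ := by rw [hb]; nlinarith
        · -- use right node
          have ha : 1 - chebNode N (j-1) = Real.sin ((π - (2*jr-3)*h)/2)^2 := by
            rw [hxj1, sin_half_sq, Real.cos_pi_sub]
            ring
          have hφ : Real.sin (π - θ) = Real.sin θ := Real.sin_pi_sub θ
          have ha2 : (π - (2*jr-3)*h)/2 ≤ π - θ := by rw [hθdef] at *; nlinarith
          have ha0 : 0 ≤ (π - (2*jr-3)*h)/2 := by nlinarith
          have hmono : Real.sin ((π - (2*jr-3)*h)/2) ≤ Real.sin (π - θ) :=
            Real.sin_le_sin_of_le_of_le_pi_div_two (by linarith) (by linarith) ha2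
          have hnn : 0 ≤ Real.sin ((π - (2*jr-3)*h)/2) :=
            Real.sin_nonneg_of_nonneg_of_le_pi ha0 (by nlinarith)
          have hs1 : Real.sin θ ≤ 1 := Real.sin_le_one θ
          calc min (chebNode N j) (1 - chebNode N (j-1)) ≤ 1 - chebNode N (j-1) :=
                min_le_right _ _
            _ ≤ Real.sin θ := by rw [ha, ← hφ] at *; nlinarith
      refine ⟨hgappos, ?_⟩
      rw [hgap]
      calc min (chebNode N j) (1 - chebNode N (j-1)) ≤ Real.sin θ := hmain
        _ ≤ Nr * (Real.sin θ * Real.sin h) := by nlinarith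
        _ = (N:ℝ) * (Real.sin θ * Real.sin h) := by rw [hNrdef]

/-- For the Chebyshev mesh, `Σ_j d_{K_j}/|K_j| ≤ C N²`, where
`|K_j| = x_j - x_{j-1}` and `d_{K_j} = sup_{x ∈ [x_{j-1},x_j]} min(x,1-x)`. -/
theorem chebyshev_mesh_weighted_sum_bound :
    ∃ C : ℝ, 0 < C ∧ ∀ N : ℕ, 3 ≤ N →
      ∑ j ∈ Finset.Icc 1 N,
        (sSup ((fun t => min t (1 - t)) ''
            Set.Icc (chebNode N (j - 1)) (chebNode N j))) /
          (chebNode N j - chebNode N (j - 1)) ≤ C * N ^ 2 := by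
  refine ⟨1, one_pos, fun N hN => ?_⟩
  have hterm : ∀ j ∈ Finset.Icc 1 N,
      (sSup ((fun t => min t (1 - t)) ''
          Set.Icc (chebNode N (j - 1)) (chebNode N j))) /
        (chebNode N j - chebNode N (j - 1)) ≤ (N:ℝ) := by
    intro j hj
    rw [Finset.mem_Icc] at hj
    obtain ⟨hgap, hmin⟩ := cheb_gap N j hN hj.1 hj.2
    have hne : (Set.Icc (chebNode N (j-1)) (chebNode N j)).Nonempty :=
      Set.nonempty_Icc.2 (by linarith)
    have hsup : sSup ((fun t => min t (1 - t)) ''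
        Set.Icc (chebNode N (j - 1)) (chebNode N j)) ≤
        min (chebNode N j) (1 - chebNode N (j-1)) := by
      apply csSup_le (hne.image _)
      rintro y ⟨t, ht, rfl⟩
      exact le_min ((min_le_left _ _).trans ht.2)
        ((min_le_right _ _).trans (by linarith [ht.1]))
    rw [div_le_iff₀ hgap]
    linarith
  calc ∑ j ∈ Finset.Icc 1 N,
        (sSup ((fun t => min t (1 - t)) ''
            Set.Icc (chebNode N (j - 1)) (chebNode N j))) /
          (chebNode N j - chebNode N (j - 1))
      ≤ ∑ _j ∈ Finset.Icc 1 N, (N:ℝ) := Finset.sum_le_sum hterm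
    _ = (N:ℝ) * (N:ℝ) := by
        rw [Finset.sum_const, Nat.card_Icc]
        simp [nsmul_eq_mul]
    _ ≤ 1 * (N:ℝ)^2 := by nlinarith
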